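/- Let (X,d) be a metric space, P a finite nonempty subset of X, k ≥ 1 an integer, and 0 < ε ≤ 1. Let q₁, …, q_k ∈ P be such that, writing C_i = {q₁, …, q_i}, for every 1 ≤ i < k one has max_{p∈P} d(p, C_i) ≤ (1 + ε/5)·d(C_i, q_{i+1}). Let q ∈ P satisfy max_{p∈P} d(p, C_k) ≤ (1 + ε/5)·d(C_k, q), and set r = (1 + ε/5)·d(C_k, q). Then: (a) every p ∈ P satisfies d(p, C_k) ≤ r; and (b) for every finite nonempty set O ⊆ X with |O| ≤ k, r ≤ (2 + ε)·max_{p∈P} d(p, O). -/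
import Mathlib


/-- correctness of the modified Gonzalez greedy algorithm
(Theorem 4 of the paper): it returns a `(2+ε)`-approximate `k`-center solution. -/
theorem stmt_8 {X : Type*} [MetricSpace X] [DecidableEq X] (P : Finset X) (hP : P.Nonempty)
    (k : ℕ) (hk : 1 ≤ k) (ε : ℝ) (hε0 : 0 < ε) (hε1 : ε ≤ 1)
    (q : ℕ → X) (hqP : ∀ i, 1 ≤ i → i ≤ k → q i ∈ P)
    (Cs : ℕ → Finset X) (hCs : ∀ i, Cs i = (Finset.Icc 1 i).image q)
    (hgreedy : ∀ i, 1 ≤ i → i < k → ∀ p ∈ P,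
      Metric.infDist p (Cs i : Set X) ≤
        (1 + ε / 5) * Metric.infDist (q (i + 1)) (Cs i : Set X))
    (qf : X) (hqf : qf ∈ P)
    (hqfar : ∀ p ∈ P, Metric.infDist p (Cs k : Set X) ≤
      (1 + ε / 5) * Metric.infDist qf (Cs k : Set X))
    (r : ℝ) (hr : r = (1 + ε / 5) * Metric.infDist qf (Cs k : Set X)) :
    (∀ p ∈ P, Metric.infDist p (Cs k : Set X) ≤ r) ∧
    (∀ O : Finset X, O.Nonempty → O.card ≤ k →
      r ≤ (2 + ε) * P.sup' hP (fun p => Metric.infDist p (O : Set X))) := by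
  have hfac : (0:ℝ) ≤ 1 + ε / 5 := by linarith
  have hmemCs : ∀ i m : ℕ, 1 ≤ i → i ≤ m → q i ∈ Cs m := by
    intro i m h1 h2
    rw [hCs]
    exact Finset.mem_image.mpr ⟨i, Finset.mem_Icc.mpr ⟨h1, h2⟩, rfl⟩
  constructor
  · intro p hp; rw [hr]; exact hqfar p hp
  · intro O hO hOk
    set δ := Metric.infDist qf (Cs k : Set X) with hδ
    set R := P.sup' hP (fun p => Metric.infDist p (O : Set X)) with hR
    have hRnn : 0 ≤ R := by
      obtain ⟨p0, hp0⟩ := hP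
      exact le_trans Metric.infDist_nonneg
        (Finset.le_sup' (fun p => Metric.infDist p (O : Set X)) hp0)
    have hδnn : 0 ≤ δ := Metric.infDist_nonneg
    -- the k+1 candidate points
    set x : ℕ → X := fun m => if m ≤ k then q m else qf with hx
    have hxP : ∀ m, 1 ≤ m → m ≤ k + 1 → x m ∈ P := by
      intro m h1 h2
      by_cases h : m ≤ k
      · simpa [hx, h] using hqP m h1 h
      · simpa [hx, h] using hqf
    -- key separation bound
    have key : ∀ i j : ℕ, 1 ≤ i → i < j → j ≤ k + 1 →
        δ ≤ (1 + ε / 5) * dist (x i) (x j) := by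
      intro i j hi hij hj
      have hik : i ≤ k := by omega
      have hxi : x i = q i := by simp [hx, hik]
      by_cases hjk : j ≤ k
      · obtain ⟨m, rfl⟩ : ∃ m, j = m + 1 :=
          ⟨j - 1, (Nat.succ_pred_eq_of_pos (by omega)).symm⟩
        have hm1 : 1 ≤ m := by omega
        have hmk : m < k := by omega
        have hxj : x (m + 1) = q (m + 1) := by simp [hx, hjk]
        have hsub : (Cs m : Set X) ⊆ (Cs k : Set X) := by
          rw [hCs, hCs]
          exact_mod_cast Finset.image_subset_image
            (Finset.Icc_subset_Icc_right (le_of_lt hmk))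
        have hne : ((Cs m : Set X)).Nonempty := ⟨q 1, hmemCs 1 m le_rfl hm1⟩
        have h1 : δ ≤ Metric.infDist qf (Cs m : Set X) :=
          Metric.infDist_le_infDist_of_subset hsub hne
        have h2 : Metric.infDist qf (Cs m : Set X) ≤
            (1 + ε / 5) * Metric.infDist (q (m + 1)) (Cs m : Set X) :=
          hgreedy m hm1 hmk qf hqf
        have h3 : Metric.infDist (q (m + 1)) (Cs m : Set X) ≤ dist (q (m + 1)) (q i) :=
          Metric.infDist_le_dist_of_mem (by exact_mod_cast hmemCs i m hi (by omega))
        calc δ ≤ (1 + ε / 5) * Metric.infDist (q (m + 1)) (Cs m : Set X) :=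
              le_trans h1 h2
          _ ≤ (1 + ε / 5) * dist (q (m + 1)) (q i) := by
              exact mul_le_mul_of_nonneg_left h3 hfac
          _ = (1 + ε / 5) * dist (x i) (x (m + 1)) := by
              rw [hxi, hxj, dist_comm]
      · have hj' : j = k + 1 := by omega
        have hxj : x j = qf := by simp [hx, hjk]
        have h1 : δ ≤ dist qf (q i) :=
          Metric.infDist_le_dist_of_mem (by exact_mod_cast hmemCs i k hi hik)
        have h2 : dist qf (q i) ≤ (1 + ε / 5) * dist qf (q i) := by
          nlinarith [dist_nonneg (x := qf) (y := q i)]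
        rw [hxi, hxj, dist_comm]
        exact le_trans h1 h2
    -- choose nearest center for each point
    have hOc : IsCompact (O : Set X) := O.finite_toSet.isCompact
    have hOne : ((O : Set X)).Nonempty := by exact_mod_cast hO
    have hchoice : ∀ m : ℕ, ∃ o ∈ O, Metric.infDist (x m) (O : Set X) = dist (x m) o := by
      intro m
      obtain ⟨o, ho, hd⟩ := hOc.exists_infDist_eq_dist hOne (x m)
      exact ⟨o, by exact_mod_cast ho, hd⟩
    choose f hfO hfd using hchoice
    -- pigeonhole
    have hcard : O.card < (Finset.Icc 1 (k + 1)).card := by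
      rw [Nat.card_Icc]; omega
    obtain ⟨i, hi, j, hj, hij, hfij⟩ :=
      Finset.exists_ne_map_eq_of_card_lt_of_maps_to hcard
        (fun m hm => hfO m)
    rw [Finset.mem_Icc] at hi hj
    -- make i < j
    have main : ∀ a b : ℕ, 1 ≤ a → a < b → b ≤ k + 1 → f a = f b →
        δ ≤ (1 + ε / 5) * (2 * R) := by
      intro a b ha hab hb hfab
      have hxaP := hxP a ha (by omega)
      have hxbP := hxP b (by omega) hb
      have hRa : dist (x a) (f a) ≤ R := by
        rw [← hfd a]
        exact Finset.le_sup' (fun p => Metric.infDist p (O : Set X)) hxaP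
      have hRb : dist (x b) (f b) ≤ R := by
        rw [← hfd b]
        exact Finset.le_sup' (fun p => Metric.infDist p (O : Set X)) hxbP
      have htri : dist (x a) (x b) ≤ 2 * R := by
        calc dist (x a) (x b) ≤ dist (x a) (f a) + dist (f a) (x b) := dist_triangle _ _ _
          _ = dist (x a) (f b) + dist (x b) (f b) := by rw [hfab, dist_comm (f b) (x b)]
          _ ≤ 2 * R := by rw [hfab] at hRa; linarith
      calc δ ≤ (1 + ε / 5) * dist (x a) (x b) := key a b ha hab hb
        _ ≤ (1 + ε / 5) * (2 * R) := mul_le_mul_of_nonneg_left htri hfac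
    have hδ2R : δ ≤ (1 + ε / 5) * (2 * R) := by
      rcases lt_or_gt_of_ne hij with h | h
      · exact main i j hi.1 h hj.2 hfij
      · exact main j i hj.1 h hi.2 hfij.symm
    rw [hr]
    nlinarith [mul_le_mul_of_nonneg_left hδ2R hfac, hRnn, hδnn, mul_nonneg hRnn hε0.le]
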